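/- There is no Grothendieck topology J on RingCatᵒᵖ such that both: (i) for every commutative ring A, every natural number m, and every family of elements r₁,…,r_m ∈ A generating the unit ideal of A, the sieve on the object of RingCatᵒᵖ corresponding to A generated by the morphisms opposite to the canonical localization maps A → A[rᵢ⁻¹] (i = 1,…,m) is J-covering; and (ii) the functor RingCat → Set sending a ring R to the set of unital ring homomorphisms from the trivial ring 0 to R (the representable presheaf on RingCatᵒᵖ associated to the zero ring) is a J-sheaf. -/

import Mathlib

set_option maxHeartbeats 1000000

universe u

open CategoryTheory Opposite

namespace Stmt6Aux

abbrev Mat : Type u := Matrix (Fin 2) (Fin 2) (ULift.{u} ℤ)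
abbrev AA : Type u := Fin 2 → ULift.{u} ℤ

def φ : AA.{u} →+* Mat.{u} := Matrix.diagonalRingHom _ _

def rr : Fin 2 → AA.{u} := fun i => Pi.single i 1

lemma span_rr : Ideal.span (Set.range rr.{u}) = ⊤ := by
  rw [Ideal.eq_top_iff_one]
  have h : (1 : AA.{u}) = rr 0 + rr 1 := by
    funext i
    fin_cases i <;> simp [rr]
  rw [h]
  exact add_mem (Ideal.subset_span ⟨0, rfl⟩) (Ideal.subset_span ⟨1, rfl⟩)

lemma φ_rr (i : Fin 2) : φ.{u} (rr i) = Matrix.single i i 1 := by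
  ext j k
  fin_cases i <;> fin_cases j <;> fin_cases k <;>
    simp [φ, rr, Matrix.diagonalRingHom_apply, Matrix.single, Matrix.diagonal]

lemma key (C : Type u) [Ring C] (ψ : Mat.{u} →+* C) (i : Fin 2)
    (h : IsUnit (ψ (Matrix.single i i 1))) : Subsingleton C := by
  set e := ψ (Matrix.single i i (1 : ULift.{u} ℤ)) with he
  have hee : e * e = e * 1 := by
    rw [mul_one, he, ← map_mul, Matrix.single_mul_single_same, one_mul]
  have he1 : e = 1 := h.mul_left_cancel hee
  have hne : (i + 1 : Fin 2) ≠ i := by fin_cases i <;> decide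
  have h0 : ψ (Matrix.single i (i + 1) 1) = 0 := by
    have hm : Matrix.single i (i + 1) (1 : ULift.{u} ℤ) *
        Matrix.single i i 1 = 0 := Matrix.single_mul_single_of_ne _ _ _ _ hne _
    calc ψ (Matrix.single i (i + 1) 1)
        = ψ (Matrix.single i (i + 1) 1) * e := by rw [he1, mul_one]
      _ = ψ (Matrix.single i (i + 1) 1 * Matrix.single i i 1) := by
          rw [he, map_mul]
      _ = 0 := by rw [hm, map_zero]
  have h01 : (0 : C) = 1 := by
    have hm : Matrix.single i (i + 1) (1 : ULift.{u} ℤ) *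
        Matrix.single (i + 1) i 1 = Matrix.single i i 1 := by
      rw [Matrix.single_mul_single_same, one_mul]
    calc (0 : C)
        = ψ (Matrix.single i (i + 1) 1) * ψ (Matrix.single (i + 1) i 1) := by
          rw [h0, zero_mul]
      _ = e := by rw [← map_mul, hm, he]
      _ = 1 := he1
  exact subsingleton_of_zero_eq_one h01

def pun (C : Type u) [Ring C] [Subsingleton C] : PUnit.{u + 1} →+* C where
  toFun _ := 1
  map_one' := rfl
  map_mul' _ _ := Subsingleton.elim _ _
  map_zero' := Subsingleton.elim _ _
  map_add' _ _ := Subsingleton.elim _ _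

end Stmt6Aux

open Stmt6Aux

theorem stmt_6 :
    ¬ ∃ J : GrothendieckTopology RingCat.{u}ᵒᵖ,
      (∀ (A : Type u) [CommRing A] (m : ℕ) (r : Fin m → A),
        Ideal.span (Set.range r) = ⊤ →
        Sieve.generate
            (Presieve.ofArrows (fun i : Fin m => op (RingCat.of (Localization.Away (r i))))
              (fun i => (RingCat.ofHom (algebraMap A (Localization.Away (r i)))).op)) ∈
          J (op (RingCat.of A))) ∧
      Presieve.IsSheaf J (yoneda.obj (op (RingCat.of PUnit.{u + 1}))) := by
  rintro ⟨J, hcov, hsheaf⟩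
  classical
  set S : Sieve (op (RingCat.of AA.{u})) := Sieve.generate
      (Presieve.ofArrows (fun i : Fin 2 => op (RingCat.of (Localization.Away (rr.{u} i))))
        (fun i => (RingCat.ofHom (algebraMap AA.{u} (Localization.Away (rr i)))).op)) with hSdef
  have hS : S ∈ J (op (RingCat.of AA.{u})) := hcov AA.{u} 2 rr span_rr
  set g : op (RingCat.of Mat.{u}) ⟶ op (RingCat.of AA.{u}) := (RingCat.ofHom φ.{u}).op with hg
  have hS' : S.pullback g ∈ J (op (RingCat.of Mat.{u})) := J.pullback_stable g hS
  -- every arrow in the pulled-back sieve has subsingleton (trivial) domain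
  have domSub : ∀ {Y : RingCat.{u}ᵒᵖ} (f : Y ⟶ op (RingCat.of Mat.{u})),
      (S.pullback g).arrows f → Subsingleton (Y.unop : Type u) := by
    intro Y f hf
    obtain ⟨Z, h, l, hl, heq⟩ := hf
    cases hl with
    | mk i =>
      have heq2 : RingCat.ofHom (algebraMap AA.{u} (Localization.Away (rr i))) ≫ h.unop
          = RingCat.ofHom φ.{u} ≫ f.unop := by
        have h3 := congrArg Quiver.Hom.unop heq
        simpa [hg] using h3
      have happ : h.unop.hom (algebraMap AA.{u} (Localization.Away (rr i)) (rr i))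
          = f.unop.hom (φ.{u} (rr i)) := by
        have h4 := RingHom.congr_fun (congrArg RingCat.Hom.hom heq2) (rr i)
        simpa [RingCat.hom_comp] using h4
      have hunit : IsUnit (f.unop.hom (φ.{u} (rr i))) := by
        rw [← happ]
        exact IsUnit.map h.unop.hom (IsLocalization.Away.algebraMap_isUnit (S := Localization.Away (rr i)) (rr i))
      rw [φ_rr] at hunit
      exact key _ f.unop.hom i hunit
  -- a compatible family of elements
  set P := yoneda.obj (op (RingCat.of PUnit.{u + 1})) with hP
  set x : Presieve.FamilyOfElements P (S.pullback g).arrows := fun Y f hf =>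
    letI := domSub f hf
    (RingCat.ofHom (pun (Y.unop : Type u))).op with hx
  have hcomp : x.Compatible := by
    intro Y₁ Y₂ Z g₁ g₂ f₁ f₂ h₁ h₂ hcm
    haveI hZ : Subsingleton (Z.unop : Type u) := by
      haveI := domSub f₁ h₁
      have h01 : (0 : Z.unop) = 1 := by
        calc (0 : Z.unop) = g₁.unop.hom 0 := (map_zero _).symm
          _ = g₁.unop.hom 1 := congrArg _ (Subsingleton.elim _ _)
          _ = 1 := map_one _
      exact subsingleton_of_zero_eq_one h01
    exact Quiver.Hom.unop_inj (RingCat.hom_ext (RingHom.ext fun p => Subsingleton.elim _ _))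
  obtain ⟨t, -, -⟩ := hsheaf _ hS' x hcomp
  haveI : Subsingleton (((op (RingCat.of PUnit.{u + 1})).unop : RingCat.{u}) : Type u) :=
    inferInstanceAs (Subsingleton PUnit.{u + 1})
  have h01 : (0 : Mat.{u}) = 1 := by
    calc (0 : Mat.{u}) = t.unop.hom 0 := (map_zero t.unop.hom).symm
      _ = t.unop.hom 1 := congrArg _ (Subsingleton.elim _ _)
      _ = 1 := map_one t.unop.hom
  exact zero_ne_one h01
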